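/- Let n ≥ 2, s ∈ (0,1), σ ∈ (−1,1), let Ω ⊆ ℝ^{n+1}, and let U, V : ℝ^{n+1}_+ → ℝ be locally Lipschitz functions whose traces satisfy U(x,0) = χ_E(x) and V(x,0) = χ_F(x) for measurable sets E, F ⊆ H, and such that 𝓕_{s,σ}(U,Ω) and 𝓕_{s,σ}(V,Ω) are finite. Then, with W := max(U,V) and Z := min(U,V), one has 𝓕_{s,σ}(Z,Ω) + 𝓕_{s,σ}(W,Ω) = 𝓕_{s,σ}(U,Ω) + 𝓕_{s,σ}(V,Ω). -/

import Mathlib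

open MeasureTheory Metric Set Filter
open scoped ENNReal NNReal Pointwise

noncomputable section

/-- `ℝⁿ` with the Euclidean norm. -/
abbrev Rn (n : ℕ) := EuclideanSpace ℝ (Fin n)

/-- The fractional interaction `𝓘_s(A,B)` (`ℝ≥0∞`-valued). -/
def frI (n : ℕ) (s : ℝ) (A B : Set (Rn n)) : ℝ≥0∞ :=
  ∫⁻ p in A ×ˢ B, ENNReal.ofReal (‖p.1 - p.2‖ ^ (-((n : ℝ) + s)))

/-- The fractional interaction `𝓘_s(A,B)` (real-valued). -/
def frIr (n : ℕ) (s : ℝ) (A B : Set (Rn n)) : ℝ := (frI n s A B).toReal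

/-- The last coordinate `x_n` of a point of `ℝⁿ`. -/
def lastCoord (n : ℕ) (x : Rn n) : ℝ :=
  if h : 0 < n then x ⟨n - 1, Nat.sub_lt h one_pos⟩ else 0

/-- The upper half-space `H = {x ∈ ℝⁿ : x_n > 0}`. -/
def halfSpace (n : ℕ) : Set (Rn n) := {x | 0 < lastCoord n x}

/-- `E ⊆ H` is a local minimizer of the fractional capillarity energy in `H`. -/
def LocalMin (n : ℕ) (s σ : ℝ) (E : Set (Rn n)) : Prop :=
  ∀ R : ℝ, 0 < R →
    frI n s (E ∩ ball 0 R) (Eᶜ ∩ ball 0 R) < ⊤ ∧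
    ∀ F : Set (Rn n), MeasurableSet F → F ⊆ halfSpace n →
      F \ ball 0 R = E \ ball 0 R →
      frIr n s (E ∩ ball 0 R) (Eᶜ ∩ halfSpace n)
          + frIr n s (E ∩ (ball 0 R)ᶜ) (Eᶜ ∩ ball 0 R ∩ halfSpace n)
          + σ * frIr n s (E ∩ ball 0 R) (halfSpace n)ᶜ
        ≤ frIr n s (F ∩ ball 0 R) (Fᶜ ∩ halfSpace n)
          + frIr n s (F ∩ (ball 0 R)ᶜ) (Fᶜ ∩ ball 0 R ∩ halfSpace n)
          + σ * frIr n s (F ∩ ball 0 R) (halfSpace n)ᶜ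

/-- The vertical coordinate `t` of a point of `ℝ^{n+1}`. -/
def tcoord (n : ℕ) (X : Rn (n + 1)) : ℝ := X (Fin.last n)

/-- The horizontal part `x` of a point of `ℝ^{n+1}`. -/
def xpart (n : ℕ) (X : Rn (n + 1)) : Rn n := WithLp.toLp 2 (fun i : Fin n => X i.castSucc)

/-- The point `(x,t) ∈ ℝ^{n+1}`. -/
def emb (n : ℕ) (x : Rn n) (t : ℝ) : Rn (n + 1) :=
  WithLp.toLp 2 (Fin.snoc (α := fun _ => ℝ) x.ofLp t)

/-- The open upper half-space `ℝ^{n+1}_+ = {t > 0}`. -/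
def upperHalf (n : ℕ) : Set (Rn (n + 1)) := {X | 0 < tcoord n X}

/-- The fractional Poisson kernel `𝐏_s(x,t)`, normalized so that
`∫ 𝐏_s(x,t) dx = 1` for all `t > 0`. -/
def poissonKer (n : ℕ) (s : ℝ) (x : Rn n) (t : ℝ) : ℝ :=
  (∫ z : Rn n, (‖z‖ ^ 2 + 1) ^ (-(((n : ℝ) + s) / 2)))⁻¹ * t ^ s *
    (‖x‖ ^ 2 + t ^ 2) ^ (-(((n : ℝ) + s) / 2))

/-- The `s`-extension `𝐄_u` of a function `u : ℝⁿ → ℝ`. -/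
def extu (n : ℕ) (s : ℝ) (u : Rn n → ℝ) (X : Rn (n + 1)) : ℝ :=
  ∫ y, u y * poissonKer n s (xpart n X - y) (tcoord n X)

/-- The `s`-extension `𝐄_E = 𝐄_{χ_E}` of a set `E ⊆ ℝⁿ`. -/
def extE (n : ℕ) (s : ℝ) (E : Set (Rn n)) : Rn (n + 1) → ℝ :=
  extu n s (E.indicator fun _ => (1 : ℝ))

/-- The energy `𝓕_{s,σ}(U,Ω)`. -/
def energy (n : ℕ) (s σ : ℝ) (U : Rn (n + 1) → ℝ) (Ω : Set (Rn (n + 1))) : ℝ :=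
  (∫ X in Ω ∩ upperHalf n, tcoord n X ^ (1 - s) * ‖fderiv ℝ U X‖ ^ 2)
    + (σ - 1) *
      ∫ p in {x : Rn n | emb n x 0 ∈ Ω} ×ˢ (halfSpace n)ᶜ,
        U (emb n p.1 0) * ‖p.1 - p.2‖ ^ (-((n : ℝ) + s))

/-- The monotonicity quantity `Φ_E(r) = r^{s-n} 𝓕_{s,σ}(𝐄_E, 𝓑_r)`. -/
def Phi (n : ℕ) (s σ : ℝ) (E : Set (Rn n)) (r : ℝ) : ℝ :=
  r ^ (s - (n : ℝ)) * energy n s σ (extE n s E) (ball (0 : Rn (n + 1)) r)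

/-- The fractional perimeter `Per_s(F,ω)` (real-valued). -/
def perS (n : ℕ) (s : ℝ) (F ω : Set (Rn n)) : ℝ :=
  frIr n s (F ∩ ω) (Fᶜ ∩ ω) + frIr n s (F ∩ ω) (Fᶜ ∩ ωᶜ) + frIr n s (F ∩ ωᶜ) (Fᶜ ∩ ω)

/-- The fractional perimeter `Per_s(F,ω)` (`ℝ≥0∞`-valued). -/
def perSE (n : ℕ) (s : ℝ) (F ω : Set (Rn n)) : ℝ≥0∞ :=
  frI n s (F ∩ ω) (Fᶜ ∩ ω) + frI n s (F ∩ ω) (Fᶜ ∩ ωᶜ) + frI n s (F ∩ ωᶜ) (Fᶜ ∩ ω)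

/-- `Per_{s,σ}(F,B_R)`. -/
def perSigma (n : ℕ) (s σ : ℝ) (F : Set (Rn n)) (R : ℝ) : ℝ :=
  perS n s F (ball 0 R ∩ halfSpace n) + (σ - 1) * frIr n s (F ∩ ball 0 R) (halfSpace n)ᶜ

/-- The fractional capillarity energy `𝓒_{s,σ}(E,ω)`. -/
def capEnergy (n : ℕ) (s σ : ℝ) (E ω : Set (Rn n)) : ℝ :=
  frIr n s E (ω \ E) + σ * frIr n s E ωᶜ

/-- A set `Ω ⊆ ℝ^{n+1}` has Lipschitz boundary: near each boundary point, after an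
isometry of `ℝ^{n+1}`, the set is the region above the graph of a Lipschitz function. -/
def HasLipschitzBoundary (n : ℕ) (Ω : Set (Rn (n + 1))) : Prop :=
  ∀ p ∈ frontier Ω, ∃ (g : Rn (n + 1) ≃ᵢ Rn (n + 1)) (f : Rn n → ℝ) (K : ℝ≥0) (ε : ℝ),
    0 < ε ∧ LipschitzWith K f ∧
      Ω ∩ ball p ε = {X ∈ ball p ε | f (xpart n (g X)) < tcoord n (g X)}

/-- A set `ω ⊆ ℝⁿ` has `C¹` boundary: near each boundary point it is the sublevel set
of a `C¹` defining function with nonvanishing gradient. -/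
def HasC1Boundary (n : ℕ) (ω : Set (Rn n)) : Prop :=
  ∀ p ∈ frontier ω, ∃ (f : Rn n → ℝ) (U : Set (Rn n)), IsOpen U ∧ p ∈ U ∧
    ContDiffOn ℝ 1 f U ∧ (∀ q ∈ U, fderiv ℝ f q ≠ 0) ∧ ω ∩ U = {q ∈ U | f q < 0}

/-- Convergence `χ_{E_k} → χ_E` in `L¹_loc(ℝⁿ)`. -/
def TendstoL1loc (n : ℕ) (Ek : ℕ → Set (Rn n)) (E : Set (Rn n)) : Prop :=
  ∀ K : Set (Rn n), IsCompact K →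
    Tendsto (fun k => ∫ x in K,
        |(Ek k).indicator (fun _ => (1 : ℝ)) x - E.indicator (fun _ => (1 : ℝ)) x|)
      atTop (nhds 0)

/-- The quantity `M(ϑ,s)` appearing in the fractional Young law. -/
def Mfun (ϑ s : ℝ) : ℝ :=
  2 * ∫ r in Ioi (0 : ℝ), ∫ t in Ioo (0 : ℝ) ϑ,
      r * (r ^ 2 + 2 * r * Real.cos t + 1) ^ (-((2 + s) / 2))

section Aux17
open Asymptotics

set_option maxHeartbeats 1000000 in
lemma measurable_rpow_const' (c : ℝ) : Measurable fun x : ℝ => x ^ c := by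
  measurability

lemma abs_min_le (a b : ℝ) : |min a b| ≤ |a| + |b| := by
  rcases min_cases a b with ⟨h, _⟩ | ⟨h, _⟩ <;> rw [h]
  · linarith [abs_nonneg b]
  · linarith [abs_nonneg a]

lemma abs_max_le (a b : ℝ) : |max a b| ≤ |a| + |b| := by
  rcases max_cases a b with ⟨h, _⟩ | ⟨h, _⟩ <;> rw [h]
  · linarith [abs_nonneg b]
  · linarith [abs_nonneg a]

lemma locLip_ae_diff {d : ℕ} {f : Rn d → ℝ} (hf : LocallyLipschitz f) :
    ∀ᵐ x : Rn d, DifferentiableAt ℝ f x := by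
  choose K t ht hlip using hf
  obtain ⟨c, hc, hcover⟩ := TopologicalSpace.countable_cover_nhds
    (f := fun x => interior (t x)) (fun x => interior_mem_nhds.2 (ht x))
  have H : ∀ x₀ ∈ c, ∀ᵐ y : Rn d, y ∈ interior (t x₀) → DifferentiableAt ℝ f y := by
    intro x₀ _
    filter_upwards [((hlip x₀).mono interior_subset).ae_differentiableWithinAt_of_mem
      (μ := volume)] with y hy hmem
    exact (hy hmem).differentiableAt (isOpen_interior.mem_nhds hmem)
  filter_upwards [(MeasureTheory.ae_ball_iff hc).2 H] with y hy
  have hmem : y ∈ ⋃ x ∈ c, interior (t x) := hcover ▸ Set.mem_univ y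
  obtain ⟨x₀, hx₀, hm⟩ := Set.mem_iUnion₂.1 hmem
  exact hy x₀ hx₀ hm

lemma levelSet_fderiv_zero {d : ℕ} {f : Rn (d + 1) → ℝ} (hf : Continuous f) :
    ∀ᵐ x : Rn (d + 1), f x = 0 → DifferentiableAt ℝ f x → fderiv ℝ f x = 0 := by
  set v : Rn (d + 1) := EuclideanSpace.single 0 1 with hv_def
  have hv : v ≠ 0 := by
    have h1 : ‖v‖ = 1 := by rw [hv_def, EuclideanSpace.norm_single]; simp
    intro h; rw [h, norm_zero] at h1; norm_num at h1
  set s : Set (Rn (d + 1)) := {x | f x = 0} ∩ {x | DifferentiableAt ℝ f x} with hs_def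
  have hs : MeasurableSet s :=
    ((measurableSet_singleton (0 : ℝ)).preimage hf.measurable).inter
      (measurableSet_of_differentiableAt ℝ f)
  have approx : ApproximatesLinearOn (fun x => f x • v)
      (0 : Rn (d + 1) →L[ℝ] Rn (d + 1)) s 0 := by
    intro x hx y hy
    have h1 : f x = 0 := hx.1
    have h2 : f y = 0 := hy.1
    simp [h1, h2]
  have key := approx.norm_fderiv_sub_le (μ := volume) hs
      (fun x => (fderiv ℝ f x).smulRight v)
      (fun x hx => (hx.2.hasFDerivAt.smul_const v).hasFDerivWithinAt)
  rw [MeasureTheory.ae_restrict_iff' hs] at key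
  filter_upwards [key] with x hx h0 hdiff
  have hx' := hx ⟨h0, hdiff⟩
  have h2 : ‖(fderiv ℝ f x).smulRight v - 0‖₊ = 0 := le_antisymm (by simpa using hx') zero_le
  rcases (by simpa [sub_zero] using h2 : fderiv ℝ f x = 0 ∨ v = 0) with h | h
  · exact h
  · exact absurd h hv

lemma hasFDerivAt_min' {d : ℕ} {f g : Rn d → ℝ} {x : Rn d} {L : Rn d →L[ℝ] ℝ}
    (hf : HasFDerivAt f L x) (hg : HasFDerivAt g L x) (hfg : f x = g x) :
    HasFDerivAt (fun y => min (f y) (g y)) L x := by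
  have h1 := hf.isLittleO
  have h2 := hg.isLittleO
  refine HasFDerivAt.of_isLittleO ?_
  have e : ∀ y, min (f y) (g y) - min (f x) (g x) - L (y - x)
      = min (f y - f x - L (y - x)) (g y - g x - L (y - x)) := by
    intro y
    rw [min_eq_left (le_of_eq hfg)]
    rcases le_total (f y) (g y) with h | h
    · rw [min_eq_left h, min_eq_left (by rw [hfg]; linarith)]
    · rw [min_eq_right h, min_eq_right (by rw [hfg]; linarith), hfg]
  have hbig : (fun y => min (f y) (g y) - min (f x) (g x) - L (y - x)) =O[nhds x]
      (fun y => ‖f y - f x - L (y - x)‖ + ‖g y - g x - L (y - x)‖) := by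
    refine IsBigO.of_bound 1 (Filter.Eventually.of_forall fun y => ?_)
    rw [e y, one_mul, Real.norm_eq_abs, Real.norm_eq_abs,
      abs_of_nonneg (by positivity : (0:ℝ) ≤ ‖f y - f x - L (y - x)‖ + ‖g y - g x - L (y - x)‖)]
    simpa [Real.norm_eq_abs] using abs_min_le (f y - f x - L (y - x)) (g y - g x - L (y - x))
  exact hbig.trans_isLittleO (h1.norm_left.add h2.norm_left)

lemma hasFDerivAt_max' {d : ℕ} {f g : Rn d → ℝ} {x : Rn d} {L : Rn d →L[ℝ] ℝ}
    (hf : HasFDerivAt f L x) (hg : HasFDerivAt g L x) (hfg : f x = g x) :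
    HasFDerivAt (fun y => max (f y) (g y)) L x := by
  have h := (hasFDerivAt_min' hf.neg hg.neg (by simp [hfg])).neg
  have he : (fun y => -min (-f y) (-g y)) = fun y => max (f y) (g y) := by
    funext y; rw [min_neg_neg, neg_neg]
  rw [neg_neg] at h
  rw [← he]; exact h

lemma key_ae {d : ℕ} {U V : Rn (d + 1) → ℝ} (hU : LocallyLipschitz U) (hV : LocallyLipschitz V) :
    ∀ᵐ X : Rn (d + 1),
      ‖fderiv ℝ (fun Y => min (U Y) (V Y)) X‖ ^ 2 + ‖fderiv ℝ (fun Y => max (U Y) (V Y)) X‖ ^ 2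
        = ‖fderiv ℝ U X‖ ^ 2 + ‖fderiv ℝ V X‖ ^ 2 := by
  filter_upwards [locLip_ae_diff hU, locLip_ae_diff hV,
    levelSet_fderiv_zero (hU.continuous.sub hV.continuous)] with X hdU hdV hlev
  rcases lt_trichotomy (U X) (V X) with hlt | heq | hgt
  · have ho : IsOpen {Y | U Y < V Y} := isOpen_lt hU.continuous hV.continuous
    have e1 : (fun Y => min (U Y) (V Y)) =ᶠ[nhds X] U :=
      Filter.eventuallyEq_of_mem (ho.mem_nhds hlt) (fun y hy => min_eq_left (le_of_lt hy))
    have e2 : (fun Y => max (U Y) (V Y)) =ᶠ[nhds X] V :=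
      Filter.eventuallyEq_of_mem (ho.mem_nhds hlt) (fun y hy => max_eq_right (le_of_lt hy))
    rw [e1.fderiv_eq, e2.fderiv_eq]
  · have h0 : fderiv ℝ (fun Y => U Y - V Y) X = 0 :=
      hlev (by simp [heq]) (hdU.sub hdV)
    rw [fderiv_fun_sub hdU hdV, sub_eq_zero] at h0
    have hVd : HasFDerivAt V (fderiv ℝ U X) X := h0 ▸ hdV.hasFDerivAt
    have hmin := (hasFDerivAt_min' hdU.hasFDerivAt hVd heq).fderiv
    have hmax := (hasFDerivAt_max' hdU.hasFDerivAt hVd heq).fderiv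
    rw [hmin, hmax, ← h0]
  · have ho : IsOpen {Y | V Y < U Y} := isOpen_lt hV.continuous hU.continuous
    have e1 : (fun Y => min (U Y) (V Y)) =ᶠ[nhds X] V :=
      Filter.eventuallyEq_of_mem (ho.mem_nhds hgt) (fun y hy => min_eq_right (le_of_lt hy))
    have e2 : (fun Y => max (U Y) (V Y)) =ᶠ[nhds X] U :=
      Filter.eventuallyEq_of_mem (ho.mem_nhds hgt) (fun y hy => max_eq_left (le_of_lt hy))
    rw [e1.fderiv_eq, e2.fderiv_eq]
    ring

end Aux17

/-- the energy `𝓕_{s,σ}` is additive under min/max. -/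
theorem stmt_17 (n : ℕ) (hn : 2 ≤ n) (s σ : ℝ) (hs : s ∈ Set.Ioo (0 : ℝ) 1)
    (hσ : σ ∈ Set.Ioo (-1 : ℝ) 1) (Ω : Set (Rn (n + 1))) (U V : Rn (n + 1) → ℝ)
    (hU : LocallyLipschitz U) (hV : LocallyLipschitz V)
    (E F : Set (Rn n)) (hEmeas : MeasurableSet E) (hFmeas : MeasurableSet F)
    (hEH : E ⊆ halfSpace n) (hFH : F ⊆ halfSpace n)
    (hUtr : ∀ x : Rn n, U (emb n x 0) = E.indicator (fun _ => (1 : ℝ)) x)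
    (hVtr : ∀ x : Rn n, V (emb n x 0) = F.indicator (fun _ => (1 : ℝ)) x)
    (hU1 : IntegrableOn (fun X => tcoord n X ^ (1 - s) * ‖fderiv ℝ U X‖ ^ 2)
      (Ω ∩ upperHalf n))
    (hV1 : IntegrableOn (fun X => tcoord n X ^ (1 - s) * ‖fderiv ℝ V X‖ ^ 2)
      (Ω ∩ upperHalf n))
    (hU2 : IntegrableOn
      (fun p : Rn n × Rn n => U (emb n p.1 0) * ‖p.1 - p.2‖ ^ (-((n : ℝ) + s)))
      ({x : Rn n | emb n x 0 ∈ Ω} ×ˢ (halfSpace n)ᶜ))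
    (hV2 : IntegrableOn
      (fun p : Rn n × Rn n => V (emb n p.1 0) * ‖p.1 - p.2‖ ^ (-((n : ℝ) + s)))
      ({x : Rn n | emb n x 0 ∈ Ω} ×ˢ (halfSpace n)ᶜ)) :
    energy n s σ (fun X => min (U X) (V X)) Ω + energy n s σ (fun X => max (U X) (V X)) Ω
      = energy n s σ U Ω + energy n s σ V Ω := by
  have hkey := key_ae (d := n) hU hV
  -- measurability of the weight
  have htc : Measurable fun X : Rn (n + 1) => tcoord n X := by
    unfold tcoord; exact (PiLp.continuous_apply (p := 2) (β := fun _ : Fin (n + 1) => ℝ) (Fin.last n)).measurable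
  have hr : Measurable fun y : ℝ => y ^ (1 - s) := measurable_rpow_const' _
  have hw : Measurable fun X : Rn (n + 1) => tcoord n X ^ (1 - s) := hr.comp htc
  have hmg : ∀ f : Rn (n + 1) → ℝ,
      Measurable fun X => tcoord n X ^ (1 - s) * ‖fderiv ℝ f X‖ ^ 2 := by
    intro f
    exact hw.mul (((measurable_fderiv ℝ f).norm).pow_const 2)
  -- integrability of the gradient terms for min and max
  have hbound : ∀ᵐ X : Rn (n + 1),
      ‖fderiv ℝ (fun Y => min (U Y) (V Y)) X‖ ^ 2 ≤ ‖fderiv ℝ U X‖ ^ 2 + ‖fderiv ℝ V X‖ ^ 2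
      ∧ ‖fderiv ℝ (fun Y => max (U Y) (V Y)) X‖ ^ 2
          ≤ ‖fderiv ℝ U X‖ ^ 2 + ‖fderiv ℝ V X‖ ^ 2 := by
    filter_upwards [hkey] with X hX
    constructor
    · nlinarith [norm_nonneg (fderiv ℝ (fun Y => max (U Y) (V Y)) X),
        sq_nonneg ‖fderiv ℝ (fun Y => max (U Y) (V Y)) X‖]
    · nlinarith [norm_nonneg (fderiv ℝ (fun Y => min (U Y) (V Y)) X),
        sq_nonneg ‖fderiv ℝ (fun Y => min (U Y) (V Y)) X‖]
  have hIntGrad : ∀ f : Rn (n + 1) → ℝ,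
      (∀ᵐ X : Rn (n + 1),
        ‖fderiv ℝ f X‖ ^ 2 ≤ ‖fderiv ℝ U X‖ ^ 2 + ‖fderiv ℝ V X‖ ^ 2) →
      IntegrableOn (fun X => tcoord n X ^ (1 - s) * ‖fderiv ℝ f X‖ ^ 2)
        (Ω ∩ upperHalf n) := by
    intro f hb
    refine (hU1.abs.add hV1.abs).mono' (hmg f).aestronglyMeasurable ?_
    filter_upwards [ae_restrict_of_ae hb] with X hX
    have h1 : |‖fderiv ℝ f X‖ ^ 2| = ‖fderiv ℝ f X‖ ^ 2 := abs_of_nonneg (by positivity)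
    calc ‖tcoord n X ^ (1 - s) * ‖fderiv ℝ f X‖ ^ 2‖
        = |tcoord n X ^ (1 - s)| * ‖fderiv ℝ f X‖ ^ 2 := by
          rw [Real.norm_eq_abs, abs_mul, h1]
      _ ≤ |tcoord n X ^ (1 - s)| * (‖fderiv ℝ U X‖ ^ 2 + ‖fderiv ℝ V X‖ ^ 2) :=
          mul_le_mul_of_nonneg_left hX (abs_nonneg _)
      _ = |tcoord n X ^ (1 - s) * ‖fderiv ℝ U X‖ ^ 2|
            + |tcoord n X ^ (1 - s) * ‖fderiv ℝ V X‖ ^ 2| := by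
          rw [abs_mul, abs_mul, abs_of_nonneg (by positivity : (0:ℝ) ≤ ‖fderiv ℝ U X‖ ^ 2),
            abs_of_nonneg (by positivity : (0:ℝ) ≤ ‖fderiv ℝ V X‖ ^ 2), mul_add]
  have hIntMin := hIntGrad _ (by filter_upwards [hbound] with X hX using hX.1)
  have hIntMax := hIntGrad _ (by filter_upwards [hbound] with X hX using hX.2)
  have hgrad :
      (∫ X in Ω ∩ upperHalf n,
        tcoord n X ^ (1 - s) * ‖fderiv ℝ (fun Y => min (U Y) (V Y)) X‖ ^ 2)
      + (∫ X in Ω ∩ upperHalf n,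
        tcoord n X ^ (1 - s) * ‖fderiv ℝ (fun Y => max (U Y) (V Y)) X‖ ^ 2)
      = (∫ X in Ω ∩ upperHalf n, tcoord n X ^ (1 - s) * ‖fderiv ℝ U X‖ ^ 2)
        + (∫ X in Ω ∩ upperHalf n, tcoord n X ^ (1 - s) * ‖fderiv ℝ V X‖ ^ 2) := by
    rw [← integral_add hIntMin hIntMax, ← integral_add hU1 hV1]
    refine integral_congr_ae ?_
    filter_upwards [ae_restrict_of_ae hkey] with X hX
    rw [← mul_add, ← mul_add, hX]
  -- interaction part
  simp only [hUtr] at hU2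
  simp only [hVtr] at hV2
  have hk : Measurable fun p : Rn n × Rn n => ‖p.1 - p.2‖ ^ (-((n : ℝ) + s)) := by
    have h1 : Measurable fun p : Rn n × Rn n => ‖p.1 - p.2‖ :=
      (measurable_fst.sub measurable_snd).norm
    have h2 : Measurable fun y : ℝ => y ^ (-((n : ℝ) + s)) := measurable_rpow_const' _
    exact h2.comp h1
  have ha : Measurable fun p : Rn n × Rn n => E.indicator (fun _ => (1 : ℝ)) p.1 :=
    (measurable_const.indicator hEmeas).comp measurable_fst
  have hb : Measurable fun p : Rn n × Rn n => F.indicator (fun _ => (1 : ℝ)) p.1 :=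
    (measurable_const.indicator hFmeas).comp measurable_fst
  have hIntInter : ∀ g : ℝ → ℝ → ℝ, (∀ a b : ℝ, |g a b| ≤ |a| + |b|) →
      (Measurable fun p : ℝ × ℝ => g p.1 p.2) →
      IntegrableOn (fun p : Rn n × Rn n =>
          g (E.indicator (fun _ => (1 : ℝ)) p.1) (F.indicator (fun _ => (1 : ℝ)) p.1)
            * ‖p.1 - p.2‖ ^ (-((n : ℝ) + s)))
        ({x : Rn n | emb n x 0 ∈ Ω} ×ˢ (halfSpace n)ᶜ) := by
    intro g hg hgm
    refine (hU2.abs.add hV2.abs).mono'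
      (((hgm.comp (ha.prodMk hb)).mul hk).aestronglyMeasurable)
      (Filter.Eventually.of_forall fun p => ?_)
    simp only [Pi.add_apply]
    rw [Real.norm_eq_abs, abs_mul, abs_mul, abs_mul]
    have h1 := hg (E.indicator (fun _ => (1 : ℝ)) p.1) (F.indicator (fun _ => (1 : ℝ)) p.1)
    nlinarith [abs_nonneg (‖p.1 - p.2‖ ^ (-((n : ℝ) + s))),
      abs_nonneg (E.indicator (fun _ => (1 : ℝ)) p.1),
      abs_nonneg (F.indicator (fun _ => (1 : ℝ)) p.1)]
  have hImin := hIntInter min (fun a b => abs_min_le a b) (measurable_fst.min measurable_snd)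
  have hImax := hIntInter max (fun a b => abs_max_le a b) (measurable_fst.max measurable_snd)
  have hinter :
      (∫ p in {x : Rn n | emb n x 0 ∈ Ω} ×ˢ (halfSpace n)ᶜ,
        min (E.indicator (fun _ => (1 : ℝ)) p.1) (F.indicator (fun _ => (1 : ℝ)) p.1)
          * ‖p.1 - p.2‖ ^ (-((n : ℝ) + s)))
      + (∫ p in {x : Rn n | emb n x 0 ∈ Ω} ×ˢ (halfSpace n)ᶜ,
        max (E.indicator (fun _ => (1 : ℝ)) p.1) (F.indicator (fun _ => (1 : ℝ)) p.1)
          * ‖p.1 - p.2‖ ^ (-((n : ℝ) + s)))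
      = (∫ p in {x : Rn n | emb n x 0 ∈ Ω} ×ˢ (halfSpace n)ᶜ,
        E.indicator (fun _ => (1 : ℝ)) p.1 * ‖p.1 - p.2‖ ^ (-((n : ℝ) + s)))
        + (∫ p in {x : Rn n | emb n x 0 ∈ Ω} ×ˢ (halfSpace n)ᶜ,
        F.indicator (fun _ => (1 : ℝ)) p.1 * ‖p.1 - p.2‖ ^ (-((n : ℝ) + s))) := by
    rw [← integral_add hImin hImax, ← integral_add hU2 hV2]
    refine integral_congr_ae (Filter.Eventually.of_forall fun p => ?_)
    dsimp only
    rw [← add_mul, ← add_mul, min_add_max]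
  simp only [energy, hUtr, hVtr]
  have hfin : (σ - 1) * (∫ p in {x : Rn n | emb n x 0 ∈ Ω} ×ˢ (halfSpace n)ᶜ,
        min (E.indicator (fun _ => (1 : ℝ)) p.1) (F.indicator (fun _ => (1 : ℝ)) p.1)
          * ‖p.1 - p.2‖ ^ (-((n : ℝ) + s)))
      + (σ - 1) * (∫ p in {x : Rn n | emb n x 0 ∈ Ω} ×ˢ (halfSpace n)ᶜ,
        max (E.indicator (fun _ => (1 : ℝ)) p.1) (F.indicator (fun _ => (1 : ℝ)) p.1)
          * ‖p.1 - p.2‖ ^ (-((n : ℝ) + s)))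
      = (σ - 1) * (∫ p in {x : Rn n | emb n x 0 ∈ Ω} ×ˢ (halfSpace n)ᶜ,
        E.indicator (fun _ => (1 : ℝ)) p.1 * ‖p.1 - p.2‖ ^ (-((n : ℝ) + s)))
        + (σ - 1) * (∫ p in {x : Rn n | emb n x 0 ∈ Ω} ×ˢ (halfSpace n)ᶜ,
        F.indicator (fun _ => (1 : ℝ)) p.1 * ‖p.1 - p.2‖ ^ (-((n : ℝ) + s))) := by
    rw [← mul_add, ← mul_add, hinter]
  linarith [hgrad, hfin]
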